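/- arXiv:2601.12949 — 2 statements merged into one kernel-verified Lean document; each statement's English description precedes it below -/
import Mathlib

section
/- Let γ ∈ ℝ, let a_x, a_y : ℝ → ℝ be C¹ functions, let w : ℝ² → ℝ be C³, and let ψ_H : ℝ × ℝ² → ℝ be C². Define the completed potential components A_u(u,p) = γ·(a_x'(u)·∂_x w(p) + a_y'(u)·∂_y w(p)), and A_i(u,p) = a_i(u) + γ·∂_i[a_x(u)·∂_x w(p) + a_y(u)·∂_y w(p) + ψ_H(u,p)] for i ∈ {x,y}. Then (i) the transverse field component vanishes: F_xy := ∂_x A_y − ∂_y A_x = 0 identically; and (ii) the radiative components satisfy the cancellation F_{ui} := ∂_u A_i − ∂_i A_u = a_i'(u) + γ·∂_i(∂_u ψ_H)(u,p) for all (u,p), i.e. all dependence on w cancels from F_{ui}. -/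
noncomputable section

/-- Partial derivative in the first transverse coordinate `x`. -/
def pderivX (g : ℝ × ℝ → ℝ) (p : ℝ × ℝ) : ℝ :=
  deriv (fun t => g (t, p.2)) p.1

/-- Partial derivative in the second transverse coordinate `y`. -/
def pderivY (g : ℝ × ℝ → ℝ) (p : ℝ × ℝ) : ℝ :=
  deriv (fun t => g (p.1, t)) p.2

/-- The completed `u`-component of the potential:
`A_u(u,p) = γ (a_x'(u) ∂_x w(p) + a_y'(u) ∂_y w(p))`. -/
def Acompu (γ : ℝ) (ax ay : ℝ → ℝ) (w : ℝ × ℝ → ℝ) (u : ℝ) (p : ℝ × ℝ) : ℝ :=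
  γ * (deriv ax u * pderivX w p + deriv ay u * pderivY w p)

/-- The completion scalar `Ψ(u,p) = a_x(u) ∂_x w(p) + a_y(u) ∂_y w(p) + ψ_H(u,p)`. -/
def Ψc (ax ay : ℝ → ℝ) (w : ℝ × ℝ → ℝ) (ψH : ℝ → ℝ × ℝ → ℝ) (u : ℝ) (p : ℝ × ℝ) : ℝ :=
  ax u * pderivX w p + ay u * pderivY w p + ψH u p

/-- `A_x(u,p) = a_x(u) + γ ∂_x Ψ(u,p)`. -/
def Acompx (γ : ℝ) (ax ay : ℝ → ℝ) (w : ℝ × ℝ → ℝ) (ψH : ℝ → ℝ × ℝ → ℝ)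
    (u : ℝ) (p : ℝ × ℝ) : ℝ :=
  ax u + γ * pderivX (Ψc ax ay w ψH u) p

/-- `A_y(u,p) = a_y(u) + γ ∂_y Ψ(u,p)`. -/
def Acompy (γ : ℝ) (ax ay : ℝ → ℝ) (w : ℝ × ℝ → ℝ) (ψH : ℝ → ℝ × ℝ → ℝ)
    (u : ℝ) (p : ℝ × ℝ) : ℝ :=
  ay u + γ * pderivY (Ψc ax ay w ψH u) p

section GaugeHelpers

variable {E : Type*} [NormedAddCommGroup E] [NormedSpace ℝ E]

lemma line_hasDerivAt {F : E → ℝ} {c : ℝ → E} {v : E} {t : ℝ}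
    (hF : DifferentiableAt ℝ F (c t)) (hc : HasDerivAt c v t) :
    HasDerivAt (fun s => F (c s)) (fderiv ℝ F (c t) v) t := by
  exact hF.hasFDerivAt.comp_hasDerivAt t hc

lemma clairaut {F : E → ℝ} (hF : ContDiff ℝ 2 F) (q v v' : E) :
    fderiv ℝ (fun x => fderiv ℝ F x v) q v' = fderiv ℝ (fun x => fderiv ℝ F x v') q v := by
  have hdf : Differentiable ℝ (fderiv ℝ F) :=
    (hF.fderiv_right (le_refl _)).differentiable one_ne_zero
  have h1 : ∀ u : E, fderiv ℝ (fun x => fderiv ℝ F x u) q = (fderiv ℝ (fderiv ℝ F) q).flip u := by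
    intro u
    rw [fderiv_clm_apply (hdf q) (differentiableAt_const u)]
    simp
  have hsymm := second_derivative_symmetric
      (fun y => ((hF.differentiable (by norm_num)) y).hasFDerivAt)
      ((hdf q).hasFDerivAt) v v'
  rw [h1 v, h1 v']
  simp only [ContinuousLinearMap.flip_apply]
  exact hsymm.symm

lemma pdX_hasDerivAt {g : ℝ × ℝ → ℝ} {p : ℝ × ℝ} (hg : DifferentiableAt ℝ g p) :
    HasDerivAt (fun t => g (t, p.2)) (fderiv ℝ g p (1, 0)) p.1 := by
  have hc : HasDerivAt (fun t : ℝ => (t, p.2)) ((1 : ℝ), (0 : ℝ)) p.1 :=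
    (hasDerivAt_id' (x := p.1)).prodMk (hasDerivAt_const _ _)
  have := line_hasDerivAt (c := fun t : ℝ => (t, p.2)) (by simpa using hg) hc
  simpa using this

lemma pdY_hasDerivAt {g : ℝ × ℝ → ℝ} {p : ℝ × ℝ} (hg : DifferentiableAt ℝ g p) :
    HasDerivAt (fun t => g (p.1, t)) (fderiv ℝ g p (0, 1)) p.2 := by
  have hc : HasDerivAt (fun t : ℝ => (p.1, t)) ((0 : ℝ), (1 : ℝ)) p.2 :=
    (hasDerivAt_const _ _).prodMk (hasDerivAt_id' (x := p.2))
  have := line_hasDerivAt (c := fun t : ℝ => (p.1, t)) (by simpa using hg) hc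
  simpa using this

lemma pdU3_hasDerivAt {G : ℝ × (ℝ × ℝ) → ℝ} {u : ℝ} {p : ℝ × ℝ}
    (hG : DifferentiableAt ℝ G (u, p)) :
    HasDerivAt (fun t => G (t, p)) (fderiv ℝ G (u, p) (1, (0, 0))) u := by
  have hc : HasDerivAt (fun t : ℝ => (t, p)) ((1 : ℝ), ((0 : ℝ), (0 : ℝ))) u :=
    (hasDerivAt_id' (x := u)).prodMk (hasDerivAt_const _ _)
  have := line_hasDerivAt (c := fun t : ℝ => (t, p)) (by simpa using hG) hc
  simpa using this

lemma pdX3_hasDerivAt {G : ℝ × (ℝ × ℝ) → ℝ} {u : ℝ} {p : ℝ × ℝ}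
    (hG : DifferentiableAt ℝ G (u, p)) :
    HasDerivAt (fun s => G (u, (s, p.2))) (fderiv ℝ G (u, p) (0, (1, 0))) p.1 := by
  have hc : HasDerivAt (fun s : ℝ => ((u : ℝ), (s, p.2))) ((0 : ℝ), ((1 : ℝ), (0 : ℝ))) p.1 :=
    (hasDerivAt_const _ _).prodMk ((hasDerivAt_id' (x := p.1)).prodMk (hasDerivAt_const _ _))
  have := line_hasDerivAt (c := fun s : ℝ => ((u : ℝ), (s, p.2))) (by simpa using hG) hc
  simpa using this

lemma pdY3_hasDerivAt {G : ℝ × (ℝ × ℝ) → ℝ} {u : ℝ} {p : ℝ × ℝ}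
    (hG : DifferentiableAt ℝ G (u, p)) :
    HasDerivAt (fun s => G (u, (p.1, s))) (fderiv ℝ G (u, p) (0, (0, 1))) p.2 := by
  have hc : HasDerivAt (fun s : ℝ => ((u : ℝ), (p.1, s))) ((0 : ℝ), ((0 : ℝ), (1 : ℝ))) p.2 :=
    (hasDerivAt_const _ _).prodMk ((hasDerivAt_const _ _).prodMk (hasDerivAt_id' (x := p.2)))
  have := line_hasDerivAt (c := fun s : ℝ => ((u : ℝ), (p.1, s))) (by simpa using hG) hc
  simpa using this

end GaugeHelpers

/-- Parts (1)–(2) of the gauge-completion theorem: `F_xy = 0` identically, and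
`F_{ui} = ∂_u A_i − ∂_i A_u = a_i'(u) + γ ∂_i ∂_u ψ_H(u,p)`: all dependence on `w` cancels. -/
theorem gauge_completion_Fxy_zero_and_Fui_cancellation
    (γ : ℝ) (ax ay : ℝ → ℝ) (w : ℝ × ℝ → ℝ) (ψH : ℝ → ℝ × ℝ → ℝ)
    (hax : ContDiff ℝ 1 ax) (hay : ContDiff ℝ 1 ay)
    (hw : ContDiff ℝ 3 w)
    (hψ : ContDiff ℝ 2 (fun q : ℝ × (ℝ × ℝ) => ψH q.1 q.2)) :
    (∀ u p, pderivX (Acompy γ ax ay w ψH u) p - pderivY (Acompx γ ax ay w ψH u) p = 0)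
    ∧
    (∀ u p,
      (deriv (fun t => Acompx γ ax ay w ψH t p) u - pderivX (Acompu γ ax ay w u) p
        = deriv ax u + γ * pderivX (fun q => deriv (fun t => ψH t q) u) p)
      ∧
      (deriv (fun t => Acompy γ ax ay w ψH t p) u - pderivY (Acompu γ ax ay w u) p
        = deriv ay u + γ * pderivY (fun q => deriv (fun t => ψH t q) u) p)) := by
  set Ψ : ℝ × (ℝ × ℝ) → ℝ := fun q => ψH q.1 q.2 with hΨdef
  have hΨd : Differentiable ℝ Ψ := hψ.differentiable (by norm_num)
  have hw1 : Differentiable ℝ w := hw.differentiable (by norm_num)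
  set Wx : ℝ × ℝ → ℝ := fun q => fderiv ℝ w q (1, 0) with hWxdef
  set Wy : ℝ × ℝ → ℝ := fun q => fderiv ℝ w q (0, 1) with hWydef
  have hWx : ContDiff ℝ 2 Wx := (hw.fderiv_right (by norm_num)).clm_apply contDiff_const
  have hWy : ContDiff ℝ 2 Wy := (hw.fderiv_right (by norm_num)).clm_apply contDiff_const
  have hWxd : Differentiable ℝ Wx := hWx.differentiable (by norm_num)
  have hWyd : Differentiable ℝ Wy := hWy.differentiable (by norm_num)
  have hpwX : ∀ q, pderivX w q = Wx q := fun q => (pdX_hasDerivAt (hw1 q)).deriv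
  have hpwY : ∀ q, pderivY w q = Wy q := fun q => (pdY_hasDerivAt (hw1 q)).deriv
  have hΨc : ∀ t q, Ψc ax ay w ψH t q = ax t * Wx q + ay t * Wy q + Ψ (t, q) := by
    intro t q; simp [Ψc, hpwX, hpwY, hΨdef]
  have hΦ : ∀ t, ContDiff ℝ 2 (fun q : ℝ × ℝ => ax t * Wx q + ay t * Wy q + Ψ (t, q)) := by
    intro t
    have hψt : ContDiff ℝ 2 (fun q : ℝ × ℝ => Ψ (t, q)) :=
      hψ.comp (contDiff_const.prodMk contDiff_id)
    exact ((contDiff_const.mul hWx).add (contDiff_const.mul hWy)).add hψt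
  constructor
  · -- Part 1 : F_xy = 0
    intro u p
    set Φ : ℝ × ℝ → ℝ := fun q => ax u * Wx q + ay u * Wy q + Ψ (u, q) with hΦdef
    have hΦ2 : ContDiff ℝ 2 Φ := hΦ u
    have hΦd : Differentiable ℝ Φ := hΦ2.differentiable (by norm_num)
    set gX : ℝ × ℝ → ℝ := fun q => fderiv ℝ Φ q (1, 0) with hgXdef
    set gY : ℝ × ℝ → ℝ := fun q => fderiv ℝ Φ q (0, 1) with hgYdef
    have hgX1 : ContDiff ℝ 1 gX := (hΦ2.fderiv_right (le_refl _)).clm_apply contDiff_const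
    have hgY1 : ContDiff ℝ 1 gY := (hΦ2.fderiv_right (le_refl _)).clm_apply contDiff_const
    have hfun : Ψc ax ay w ψH u = Φ := funext fun q => hΨc u q
    have h1 : pderivX (Acompy γ ax ay w ψH u) p = γ * fderiv ℝ gY p (1, 0) := by
      have hfn : Acompy γ ax ay w ψH u = fun q => ay u + γ * gY q := by
        funext q
        simp only [Acompy, hfun]
        rw [show pderivY Φ q = gY q from (pdY_hasDerivAt (hΦd q)).deriv]
      rw [hfn]
      have h := HasDerivAt.const_add (ay u)
        (HasDerivAt.const_mul γ (pdX_hasDerivAt ((hgY1.differentiable one_ne_zero) p)))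
      exact h.deriv
    have h2 : pderivY (Acompx γ ax ay w ψH u) p = γ * fderiv ℝ gX p (0, 1) := by
      have hfn : Acompx γ ax ay w ψH u = fun q => ax u + γ * gX q := by
        funext q
        simp only [Acompx, hfun]
        rw [show pderivX Φ q = gX q from (pdX_hasDerivAt (hΦd q)).deriv]
      rw [hfn]
      have h := HasDerivAt.const_add (ax u)
        (HasDerivAt.const_mul γ (pdY_hasDerivAt ((hgX1.differentiable one_ne_zero) p)))
      exact h.deriv
    have hsw : fderiv ℝ gY p (1, 0) = fderiv ℝ gX p (0, 1) := by
      rw [hgYdef, hgXdef]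
      exact clairaut hΦ2 p (0, 1) (1, 0)
    rw [h1, h2, hsw]
    ring
  · -- Part 2
    intro u p
    set gEx : ℝ × (ℝ × ℝ) → ℝ := fun q => fderiv ℝ Ψ q (0, (1, 0)) with hgExdef
    set gEy : ℝ × (ℝ × ℝ) → ℝ := fun q => fderiv ℝ Ψ q (0, (0, 1)) with hgEydef
    set gEu : ℝ × (ℝ × ℝ) → ℝ := fun q => fderiv ℝ Ψ q (1, (0, 0)) with hgEudef
    have hgEx1 : ContDiff ℝ 1 gEx := (hψ.fderiv_right (le_refl _)).clm_apply contDiff_const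
    have hgEy1 : ContDiff ℝ 1 gEy := (hψ.fderiv_right (le_refl _)).clm_apply contDiff_const
    have hgEu1 : ContDiff ℝ 1 gEu := (hψ.fderiv_right (le_refl _)).clm_apply contDiff_const
    have hax' : HasDerivAt ax (deriv ax u) u := ((hax.differentiable one_ne_zero) u).hasDerivAt
    have hay' : HasDerivAt ay (deriv ay u) u := ((hay.differentiable one_ne_zero) u).hasDerivAt
    constructor
    · -- x component
      set Xx : ℝ := fderiv ℝ Wx p (1, 0) with hXxdef
      set Xy : ℝ := fderiv ℝ Wy p (1, 0) with hXydef
      have hA : HasDerivAt (fun s => Wx (s, p.2)) Xx p.1 := pdX_hasDerivAt (hWxd p)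
      have hB : HasDerivAt (fun s => Wy (s, p.2)) Xy p.1 := pdX_hasDerivAt (hWyd p)
      have hstep : ∀ t, pderivX (Ψc ax ay w ψH t) p
          = ax t * Xx + ay t * Xy + gEx (t, p) := by
        intro t
        have hC : HasDerivAt (fun s => Ψ (t, (s, p.2))) (fderiv ℝ Ψ (t, p) (0, (1, 0))) p.1 :=
          pdX3_hasDerivAt (hΨd (t, p))
        have h : HasDerivAt (fun s => ax t * Wx (s, p.2) + ay t * Wy (s, p.2) + Ψ (t, (s, p.2))) _ p.1 :=
          ((HasDerivAt.const_mul (ax t) hA).add (HasDerivAt.const_mul (ay t) hB)).add hC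
        have heq : (fun s => Ψc ax ay w ψH t (s, p.2))
            = fun s => ax t * Wx (s, p.2) + ay t * Wy (s, p.2) + Ψ (t, (s, p.2)) := by
          funext s; exact hΨc t (s, p.2)
        show deriv (fun s => Ψc ax ay w ψH t (s, p.2)) p.1 = _
        rw [heq, h.deriv, hgExdef]
      have hG : HasDerivAt (fun t => gEx (t, p)) (fderiv ℝ gEx (u, p) (1, (0, 0))) u :=
        pdU3_hasDerivAt ((hgEx1.differentiable one_ne_zero) (u, p))
      have hmain : HasDerivAt (fun t => Acompx γ ax ay w ψH t p)
          (deriv ax u + γ * (deriv ax u * Xx + deriv ay u * Xy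
            + fderiv ℝ gEx (u, p) (1, (0, 0)))) u := by
        have heq : (fun t => Acompx γ ax ay w ψH t p)
            = fun t => ax t + γ * (ax t * Xx + ay t * Xy + gEx (t, p)) := by
          funext t; rw [Acompx, hstep t]
        rw [heq]
        exact hax'.add (HasDerivAt.const_mul γ
          (((hax'.mul_const Xx).add (hay'.mul_const Xy)).add hG))
      have hterm2 : pderivX (Acompu γ ax ay w u) p = γ * (deriv ax u * Xx + deriv ay u * Xy) := by
        have heq : (fun s => Acompu γ ax ay w u (s, p.2))
            = fun s => γ * (deriv ax u * Wx (s, p.2) + deriv ay u * Wy (s, p.2)) := by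
          funext s; rw [Acompu, hpwX, hpwY]
        show deriv (fun s => Acompu γ ax ay w u (s, p.2)) p.1 = _
        rw [heq]
        exact (HasDerivAt.const_mul γ
          ((HasDerivAt.const_mul (deriv ax u) hA).add (HasDerivAt.const_mul (deriv ay u) hB))).deriv
      have hrhs : pderivX (fun q => deriv (fun t => ψH t q) u) p = fderiv ℝ gEu (u, p) (0, (1, 0)) := by
        have heq : (fun q : ℝ × ℝ => deriv (fun t => ψH t q) u) = fun q => gEu (u, q) := by
          funext q
          rw [hgEudef]
          exact (pdU3_hasDerivAt (hΨd (u, q))).deriv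
        rw [heq]
        exact (pdX3_hasDerivAt ((hgEu1.differentiable one_ne_zero) (u, p))).deriv
      have hsw : fderiv ℝ gEx (u, p) (1, (0, 0)) = fderiv ℝ gEu (u, p) (0, (1, 0)) := by
        rw [hgExdef, hgEudef]
        exact clairaut hψ (u, p) (0, (1, 0)) (1, (0, 0))
      rw [hmain.deriv, hterm2, hrhs, hsw]
      ring
    · -- y component
      set Yx : ℝ := fderiv ℝ Wx p (0, 1) with hYxdef
      set Yy : ℝ := fderiv ℝ Wy p (0, 1) with hYydef
      have hA : HasDerivAt (fun s => Wx (p.1, s)) Yx p.2 := pdY_hasDerivAt (hWxd p)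
      have hB : HasDerivAt (fun s => Wy (p.1, s)) Yy p.2 := pdY_hasDerivAt (hWyd p)
      have hstep : ∀ t, pderivY (Ψc ax ay w ψH t) p
          = ax t * Yx + ay t * Yy + gEy (t, p) := by
        intro t
        have hC : HasDerivAt (fun s => Ψ (t, (p.1, s))) (fderiv ℝ Ψ (t, p) (0, (0, 1))) p.2 :=
          pdY3_hasDerivAt (hΨd (t, p))
        have h : HasDerivAt (fun s => ax t * Wx (p.1, s) + ay t * Wy (p.1, s) + Ψ (t, (p.1, s))) _ p.2 :=
          ((HasDerivAt.const_mul (ax t) hA).add (HasDerivAt.const_mul (ay t) hB)).add hC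
        have heq : (fun s => Ψc ax ay w ψH t (p.1, s))
            = fun s => ax t * Wx (p.1, s) + ay t * Wy (p.1, s) + Ψ (t, (p.1, s)) := by
          funext s; exact hΨc t (p.1, s)
        show deriv (fun s => Ψc ax ay w ψH t (p.1, s)) p.2 = _
        rw [heq, h.deriv, hgEydef]
      have hG : HasDerivAt (fun t => gEy (t, p)) (fderiv ℝ gEy (u, p) (1, (0, 0))) u :=
        pdU3_hasDerivAt ((hgEy1.differentiable one_ne_zero) (u, p))
      have hmain : HasDerivAt (fun t => Acompy γ ax ay w ψH t p)
          (deriv ay u + γ * (deriv ax u * Yx + deriv ay u * Yy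
            + fderiv ℝ gEy (u, p) (1, (0, 0)))) u := by
        have heq : (fun t => Acompy γ ax ay w ψH t p)
            = fun t => ay t + γ * (ax t * Yx + ay t * Yy + gEy (t, p)) := by
          funext t; rw [Acompy, hstep t]
        rw [heq]
        exact hay'.add (HasDerivAt.const_mul γ
          (((hax'.mul_const Yx).add (hay'.mul_const Yy)).add hG))
      have hterm2 : pderivY (Acompu γ ax ay w u) p = γ * (deriv ax u * Yx + deriv ay u * Yy) := by
        have heq : (fun s => Acompu γ ax ay w u (p.1, s))
            = fun s => γ * (deriv ax u * Wx (p.1, s) + deriv ay u * Wy (p.1, s)) := by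
          funext s; rw [Acompu, hpwX, hpwY]
        show deriv (fun s => Acompu γ ax ay w u (p.1, s)) p.2 = _
        rw [heq]
        exact (HasDerivAt.const_mul γ
          ((HasDerivAt.const_mul (deriv ax u) hA).add (HasDerivAt.const_mul (deriv ay u) hB))).deriv
      have hrhs : pderivY (fun q => deriv (fun t => ψH t q) u) p = fderiv ℝ gEu (u, p) (0, (0, 1)) := by
        have heq : (fun q : ℝ × ℝ => deriv (fun t => ψH t q) u) = fun q => gEu (u, q) := by
          funext q
          rw [hgEudef]
          exact (pdU3_hasDerivAt (hΨd (u, q))).deriv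
        rw [heq]
        exact (pdY3_hasDerivAt ((hgEu1.differentiable one_ne_zero) (u, p))).deriv
      have hsw : fderiv ℝ gEy (u, p) (1, (0, 0)) = fderiv ℝ gEu (u, p) (0, (0, 1)) := by
        rw [hgEydef, hgEudef]
        exact clairaut hψ (u, p) (0, (0, 1)) (1, (0, 0))
      rw [hmain.deriv, hterm2, hrhs, hsw]
      ring

end
end

section
/- For ψ, χ ∈ ℝ and σ ∈ {−1, +1}, with â'(θ) ∈ ℝ² given by â'_x(θ) = √2·(−cos χ sin θ cos ψ − σ sin χ cos θ sin ψ) and â'_y(θ) = √2·(−cos χ sin θ sin ψ + σ sin χ cos θ cos ψ), the cycle-averaged dyadic equals the polarization projector: (1/(2π)) ∫₀^{2π} â'(θ) â'(θ)ᵀ dθ = (1/2)·[I₂ + cos 2χ · M(ψ)], where M(ψ) is the 2×2 matrix with entries M₁₁ = cos 2ψ, M₁₂ = M₂₁ = sin 2ψ, M₂₂ = −cos 2ψ. In particular the result is independent of the handedness σ. -/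
noncomputable section

open Real Matrix

/-- `x`-component of the normalized polarization-derivative vector `â'(θ)`. -/
def ahatX (ψ χ σ θ : ℝ) : ℝ :=
  Real.sqrt 2 * (-(cos χ * sin θ * cos ψ) - σ * sin χ * cos θ * sin ψ)

/-- `y`-component of the normalized polarization-derivative vector `â'(θ)`. -/
def ahatY (ψ χ σ θ : ℝ) : ℝ :=
  Real.sqrt 2 * (-(cos χ * sin θ * sin ψ) + σ * sin χ * cos θ * cos ψ)

/-- The vector `â'(θ) ∈ ℝ²`. -/
def ahat (ψ χ σ θ : ℝ) : Fin 2 → ℝ := ![ahatX ψ χ σ θ, ahatY ψ χ σ θ]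

/-- The matrix `M(ψ)` with entries `cos 2ψ, sin 2ψ; sin 2ψ, −cos 2ψ`. -/
def Mpol (ψ : ℝ) : Matrix (Fin 2) (Fin 2) ℝ :=
  !![cos (2 * ψ), sin (2 * ψ); sin (2 * ψ), -cos (2 * ψ)]

lemma key (a b c d : ℝ) :
    ∫ θ in (0:ℝ)..(2 * π), (a * sin θ + b * cos θ) * (c * sin θ + d * cos θ)
      = π * (a * c + b * d) := by
  have h : ∀ θ : ℝ, (a * sin θ + b * cos θ) * (c * sin θ + d * cos θ)
      = (a * c) * sin θ ^ 2 + ((a * d + b * c) * (sin θ * cos θ) + (b * d) * cos θ ^ 2) := by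
    intro θ; ring
  simp_rw [h]
  rw [intervalIntegral.integral_add, intervalIntegral.integral_add,
    intervalIntegral.integral_const_mul, intervalIntegral.integral_const_mul,
    intervalIntegral.integral_const_mul, integral_sin_sq, integral_sin_mul_cos₁,
    integral_cos_sq]
  · simp [Real.sin_two_pi, Real.cos_two_pi]; ring
  · exact (Continuous.intervalIntegrable (by continuity) _ _)
  · exact (Continuous.intervalIntegrable (by continuity) _ _)
  · exact (Continuous.intervalIntegrable (by continuity) _ _)
  · exact (Continuous.intervalIntegrable (by continuity) _ _)

lemma key2 (a b c d : ℝ) :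
    ∫ θ in (0:ℝ)..(2 * π),
        (Real.sqrt 2 * (a * sin θ + b * cos θ)) * (Real.sqrt 2 * (c * sin θ + d * cos θ))
      = 2 * π * (a * c + b * d) := by
  have h2 : Real.sqrt 2 * Real.sqrt 2 = 2 := Real.mul_self_sqrt (by norm_num)
  have h : ∀ θ : ℝ,
      (Real.sqrt 2 * (a * sin θ + b * cos θ)) * (Real.sqrt 2 * (c * sin θ + d * cos θ))
        = 2 * ((a * sin θ + b * cos θ) * (c * sin θ + d * cos θ)) := by
    intro θ
    rw [show (Real.sqrt 2 * (a * sin θ + b * cos θ)) * (Real.sqrt 2 * (c * sin θ + d * cos θ))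
        = (Real.sqrt 2 * Real.sqrt 2) * ((a * sin θ + b * cos θ) * (c * sin θ + d * cos θ))
        by ring, h2]
  simp_rw [h]
  rw [intervalIntegral.integral_const_mul, key]; ring

/-- The cycle-averaged polarization dyadic (entrywise integral) equals the polarization
projector `P(ψ,χ) = ½ [I₂ + cos 2χ · M(ψ)]`, independently of the handedness `σ`. -/
theorem cycle_averaged_dyadic_eq_projector (ψ χ σ : ℝ) (hσ : σ = 1 ∨ σ = -1) :
    ∀ i j : Fin 2,
      (1 / (2 * π)) * ∫ θ in (0:ℝ)..(2 * π), ahat ψ χ σ θ i * ahat ψ χ σ θ j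
        = ((1 / 2 : ℝ) • ((1 : Matrix (Fin 2) (Fin 2) ℝ) + cos (2 * χ) • Mpol ψ)) i j := by
  have hσ2 : σ ^ 2 = 1 := by rcases hσ with h | h <;> subst h <;> norm_num
  have hχ : sin χ ^ 2 + cos χ ^ 2 = 1 := sin_sq_add_cos_sq χ
  have hψ : sin ψ ^ 2 + cos ψ ^ 2 = 1 := sin_sq_add_cos_sq ψ
  have h4 : (sin χ ^ 2 + cos χ ^ 2) * (sin ψ ^ 2 + cos ψ ^ 2) = 1 := by rw [hχ, hψ]; ring
  have hc : (sin χ ^ 2 + cos χ ^ 2) * cos ψ ^ 2 = cos ψ ^ 2 := by rw [hχ]; ring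
  have hd : cos χ ^ 2 * (sin ψ ^ 2 + cos ψ ^ 2) = cos χ ^ 2 := by rw [hψ]; ring
  have hsc : (sin χ ^ 2 + cos χ ^ 2) * (sin ψ * cos ψ) = sin ψ * cos ψ := by rw [hχ]; ring
  have hs2 : σ ^ 2 * (sin χ ^ 2 * (sin ψ * cos ψ)) = sin χ ^ 2 * (sin ψ * cos ψ) := by
    rw [hσ2]; ring
  have hs3 : σ ^ 2 * (sin χ ^ 2 * sin ψ ^ 2) = sin χ ^ 2 * sin ψ ^ 2 := by rw [hσ2]; ring
  have hs4 : σ ^ 2 * (sin χ ^ 2 * cos ψ ^ 2) = sin χ ^ 2 * cos ψ ^ 2 := by rw [hσ2]; ring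
  have hπ : (2 * π) ≠ 0 := by positivity
  have key3 : ∀ a b c d : ℝ,
      (1 / (2 * π)) * ∫ θ in (0:ℝ)..(2 * π),
        (Real.sqrt 2 * (a * sin θ + b * cos θ)) * (Real.sqrt 2 * (c * sin θ + d * cos θ))
      = a * c + b * d := by
    intro a b c d
    rw [key2]; field_simp
  intro i j
  fin_cases i <;> fin_cases j
  · show (1 / (2 * π)) * (∫ θ in (0:ℝ)..(2 * π), ahat ψ χ σ θ 0 * ahat ψ χ σ θ 0)
        = ((1 / 2 : ℝ) • ((1 : Matrix (Fin 2) (Fin 2) ℝ) + cos (2 * χ) • Mpol ψ)) 0 0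
    rw [show (∫ θ in (0:ℝ)..(2 * π), ahat ψ χ σ θ 0 * ahat ψ χ σ θ 0)
        = ∫ θ in (0:ℝ)..(2 * π),
            (Real.sqrt 2 * ((-(cos χ * cos ψ)) * sin θ + (-(σ * sin χ * sin ψ)) * cos θ)) *
            (Real.sqrt 2 * ((-(cos χ * cos ψ)) * sin θ + (-(σ * sin χ * sin ψ)) * cos θ)) from
      intervalIntegral.integral_congr fun θ _ => by
        simp only [ahat, ahatX, Matrix.cons_val_zero]; ring]
    rw [key3]
    simp [Mpol, Matrix.one_apply, Real.cos_two_mul, Real.sin_two_mul]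
    nlinarith [h4, hc, hd, hs3, hs4]
  · show (1 / (2 * π)) * (∫ θ in (0:ℝ)..(2 * π), ahat ψ χ σ θ 0 * ahat ψ χ σ θ 1)
        = ((1 / 2 : ℝ) • ((1 : Matrix (Fin 2) (Fin 2) ℝ) + cos (2 * χ) • Mpol ψ)) 0 1
    rw [show (∫ θ in (0:ℝ)..(2 * π), ahat ψ χ σ θ 0 * ahat ψ χ σ θ 1)
        = ∫ θ in (0:ℝ)..(2 * π),
            (Real.sqrt 2 * ((-(cos χ * cos ψ)) * sin θ + (-(σ * sin χ * sin ψ)) * cos θ)) *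
            (Real.sqrt 2 * ((-(cos χ * sin ψ)) * sin θ + (σ * sin χ * cos ψ) * cos θ)) from
      intervalIntegral.integral_congr fun θ _ => by
        simp only [ahat, ahatX, ahatY, Matrix.cons_val_zero, Matrix.cons_val_one,
          Matrix.head_cons]; ring]
    rw [key3]
    simp [Mpol, Matrix.one_apply, Real.cos_two_mul, Real.sin_two_mul]
    nlinarith [hsc, hs2]
  · show (1 / (2 * π)) * (∫ θ in (0:ℝ)..(2 * π), ahat ψ χ σ θ 1 * ahat ψ χ σ θ 0)
        = ((1 / 2 : ℝ) • ((1 : Matrix (Fin 2) (Fin 2) ℝ) + cos (2 * χ) • Mpol ψ)) 1 0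
    rw [show (∫ θ in (0:ℝ)..(2 * π), ahat ψ χ σ θ 1 * ahat ψ χ σ θ 0)
        = ∫ θ in (0:ℝ)..(2 * π),
            (Real.sqrt 2 * ((-(cos χ * sin ψ)) * sin θ + (σ * sin χ * cos ψ) * cos θ)) *
            (Real.sqrt 2 * ((-(cos χ * cos ψ)) * sin θ + (-(σ * sin χ * sin ψ)) * cos θ)) from
      intervalIntegral.integral_congr fun θ _ => by
        simp only [ahat, ahatX, ahatY, Matrix.cons_val_zero, Matrix.cons_val_one,
          Matrix.head_cons]; ring]
    rw [key3]
    simp [Mpol, Matrix.one_apply, Real.cos_two_mul, Real.sin_two_mul]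
    nlinarith [hsc, hs2]
  · show (1 / (2 * π)) * (∫ θ in (0:ℝ)..(2 * π), ahat ψ χ σ θ 1 * ahat ψ χ σ θ 1)
        = ((1 / 2 : ℝ) • ((1 : Matrix (Fin 2) (Fin 2) ℝ) + cos (2 * χ) • Mpol ψ)) 1 1
    rw [show (∫ θ in (0:ℝ)..(2 * π), ahat ψ χ σ θ 1 * ahat ψ χ σ θ 1)
        = ∫ θ in (0:ℝ)..(2 * π),
            (Real.sqrt 2 * ((-(cos χ * sin ψ)) * sin θ + (σ * sin χ * cos ψ) * cos θ)) *
            (Real.sqrt 2 * ((-(cos χ * sin ψ)) * sin θ + (σ * sin χ * cos ψ) * cos θ)) from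
      intervalIntegral.integral_congr fun θ _ => by
        simp only [ahat, ahatY, Matrix.cons_val_one, Matrix.head_cons, Matrix.cons_val_zero]; ring]
    rw [key3]
    simp [Mpol, Matrix.one_apply, Real.cos_two_mul, Real.sin_two_mul]
    nlinarith [h4, hc, hd, hs3, hs4]

end
end
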